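/- Under the 'crawl' strategy Q = (1/3, 0, 1/3, 0, 1/3, 0) (Monte hides the prize uniformly and always offers the door with smaller number in case of match, equivalently reveals the higher-numbered door), the pure Bayesian (best-response) strategies of Conie are exactly the six strategies (x, switch, switch) and (x, hold, switch) for x ∈ {1,2,3}, each winning with probability 2/3. -/

import Mathlib

open Finset

/-- Doors are `Fin 3` (door 1 = 0, door 2 = 1, door 3 = 2). -/
abbrev Door := Fin 3

/-- Monte's pure strategy: a pair (θ, d) with prize door θ and offered door d ≠ θ. -/
abbrev MonteStrat := {p : Door × Door // p.2 ≠ p.1}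

/-- Conie's pure strategy: (x, a, b); `true` = switch, `false` = hold;
`a` is the reaction to the smaller alternative door, `b` to the larger. -/
abbrev ConieStrat := Door × Bool × Bool

/-- The smaller of the two doors different from `x`. -/
def smallerAlt (x : Door) : Door := if x = 0 then 1 else 0

/-- The larger of the two doors different from `x`. -/
def largerAlt (x : Door) : Door := if x = 2 then 1 else 2

/-- Conie's action when offered door `y` (≠ her pick). -/
def act (A : ConieStrat) (y : Door) : Bool :=
  if y = smallerAlt A.1 then A.2.1 else A.2.2

/-- Conie wins iff (mismatch and she switches against the offer θ) or
(match and she holds against the offer d). -/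
def wins (A : ConieStrat) (M : MonteStrat) : Bool :=
  if A.1 = M.val.1 then !(act A M.val.2) else act A M.val.1

/-- The 12×6 payoff matrix entry. -/
noncomputable def payoff (A : ConieStrat) (M : MonteStrat) : ℝ :=
  if wins A M then 1 else 0

/-- `B` weakly dominates `A`. -/
def dominates (B A : ConieStrat) : Prop :=
  (∀ M : MonteStrat, wins A M → wins B M) ∧ ∃ M : MonteStrat, wins B M ∧ ¬ wins A M

/-- Winning probability of pure strategy `A` against mixed strategy `Q` of Monte. -/
noncomputable def winProb (A : ConieStrat) (Q : MonteStrat → ℝ) : ℝ :=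
  ∑ M : MonteStrat, Q M * payoff A M

/-- Marginal probability that the prize is behind door `θ` under `Q`. -/
noncomputable def prizeProb (Q : MonteStrat → ℝ) (θ : Door) : ℝ :=
  ∑ M : MonteStrat, if M.val.1 = θ then Q M else 0

/-- Expected payoff of a mixed profile (P, Q). -/
noncomputable def mixedPay (P : ConieStrat → ℝ) (Q : MonteStrat → ℝ) : ℝ :=
  ∑ A : ConieStrat, ∑ M : MonteStrat, P A * payoff A M * Q M

/-- Conie's uniform always-switching mixed strategy. -/
noncomputable def Pstar : ConieStrat → ℝ := fun A => if A.2.1 = true ∧ A.2.2 = true then 1/3 else 0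

/-- against the 'crawl' strategy (uniform prize, always offer the
smaller alternative in case of match), the best responses are exactly the
strategies with second action switch, each winning with probability 2/3. -/
lemma winProb_Qc (A : ConieStrat) :
    winProb A (fun M => if M.val.2 = smallerAlt M.val.1 then (1/3:ℝ) else 0) =
    if A.2.2 then 2/3 else 1/3 := by
  rw [winProb]; unfold payoff wins
  rw [← Finset.sum_subtype (Finset.univ.filter (fun p : Door × Door => p.2 ≠ p.1))
      (fun x => by simp)
      (fun p => (if p.2 = smallerAlt p.1 then (1/3:ℝ) else 0) *
        (if (if A.1 = p.1 then !(act A p.2) else act A p.1) then 1 else 0))]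
  obtain ⟨x, a, b⟩ := A
  fin_cases x <;> cases a <;> cases b <;>
    simp [Finset.sum_filter, Fintype.sum_prod_type, Fin.sum_univ_three, act, smallerAlt] <;>
    norm_num

theorem stmt7 (Qc : MonteStrat → ℝ)
    (hQc : Qc = fun M => if M.val.2 = smallerAlt M.val.1 then (1/3 : ℝ) else 0)
    (A : ConieStrat) :
    ((∀ B : ConieStrat, winProb B Qc ≤ winProb A Qc) ↔ A.2.2 = true) ∧
    (A.2.2 = true → winProb A Qc = 2/3) := by
  subst hQc
  constructor
  · constructor
    · intro h
      by_contra hb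
      have h1 := h (0, true, true)
      rw [winProb_Qc, winProb_Qc] at h1
      simp only [Bool.not_eq_true] at hb
      simp [hb] at h1
      norm_num at h1
    · intro hb B
      rw [winProb_Qc, winProb_Qc, hb]
      by_cases hB : B.2.2 = true <;> simp [hB] <;> norm_num
  · intro hb
    rw [winProb_Qc, hb]
    norm_num
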